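/- The map sending a permutation π of Fin n to its permutation graph (the simple graph on Fin n in which i and j with i < j are adjacent iff π(i) > π(j)) is injective: two permutations with the same permutation graph are equal. -/

import Mathlib

/-- The permutation graph of `π`: vertices `i < j` are adjacent iff `π i > π j`,
i.e. iff `{i, j}` is an inversion of `π`. -/
def permGraph {n : ℕ} (π : Equiv.Perm (Fin n)) : SimpleGraph (Fin n) where
  Adj i j := (i < j ∧ π j < π i) ∨ (j < i ∧ π i < π j)
  symm := ⟨fun i j h => h.symm⟩
  loopless := ⟨fun i h => by
    rcases h with ⟨h, _⟩ | ⟨h, _⟩ <;> exact lt_irrefl i h⟩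

/-- The map sending a permutation of `Fin n` to its permutation graph is injective:
two permutations with the same permutation graph are equal. -/
theorem permGraph_injective (n : ℕ) :
    Function.Injective (fun π : Equiv.Perm (Fin n) => permGraph π) := by
  intro π σ h
  simp only at h
  have hAdj : ∀ i j, (permGraph π).Adj i j ↔ (permGraph σ).Adj i j := by
    intro i j; rw [h]
  have key : ∀ i j : Fin n, i < j → (π j < π i ↔ σ j < σ i) := by
    intro i j hij
    have := hAdj i j
    simp only [permGraph] at this
    constructor
    · intro hp
      rcases this.mp (Or.inl ⟨hij, hp⟩) with ⟨_, hs⟩ | ⟨hji, _⟩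
      · exact hs
      · exact absurd hij (asymm hji)
    · intro hs
      rcases this.mpr (Or.inl ⟨hij, hs⟩) with ⟨_, hp⟩ | ⟨hji, _⟩
      · exact hp
      · exact absurd hij (asymm hji)
  have hsm : StrictMono (π ∘ σ.symm) := by
    intro a b hab
    set i := σ.symm a with hi
    set j := σ.symm b with hj
    have hσ : σ i < σ j := by
      rw [hi, hj, Equiv.apply_symm_apply, Equiv.apply_symm_apply]; exact hab
    rcases lt_trichotomy i j with hlt | heq | hgt
    · simp only [Function.comp]
      rcases lt_trichotomy (π i) (π j) with h1 | h2 | h3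
      · exact h1
      · exact absurd (π.injective h2) (ne_of_lt hlt)
      · exact absurd ((key i j hlt).mp h3) (asymm hσ)
    · exact absurd (congrArg σ heq) (ne_of_lt hσ)
    · exact (key j i hgt).mpr hσ
  have hrange : Set.range (⇑π ∘ ⇑σ.symm) = Set.range (id : Fin n → Fin n) := by
    simp [Set.range_comp, Set.range_eq_univ.mpr σ.symm.surjective,
      Set.image_univ, Set.range_eq_univ.mpr π.surjective]
  haveI : WellFoundedLT (Fin n) := inferInstance
  have hid : ⇑π ∘ ⇑σ.symm = id := (hsm.range_inj strictMono_id).mp hrange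
  ext x
  have hx := congrFun hid (σ x)
  exact congrArg Fin.val (by simpa using hx)
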